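/- If f : U → ℝ is bounded below and F(Q,U) ⊆ int Q, then the inner invariance pressure satisfies P_int(f,Q) = inf_{u∈U} f(u). -/

import Mathlib

open Filter Topology
open scoped ENNReal

noncomputable section

/-- Solution map of the discrete-time control system `x_{k+1} = F(x_k, u_k)`. -/
def phi {X U : Type*} (F : X → U → X) : ℕ → X → (ℕ → U) → X
  | 0, x, _ => x
  | k + 1, x, ω => F (phi F k x ω) (ω k)

/-- Birkhoff-type sum of `f` along the first `n` control values. -/
def Snf {U : Type*} (f : U → ℝ) (n : ℕ) (ω : ℕ → U) : ℝ :=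
  ∑ i ∈ Finset.range n, f (ω i)

/-- `S` is a strongly `(n,Q)`-spanning set of control sequences. -/
def IsSpanningSet {X U : Type*} [TopologicalSpace X] (F : X → U → X) (Q : Set X) (n : ℕ)
    (S : Set (ℕ → U)) : Prop :=
  ∀ x ∈ Q, ∃ ω ∈ S, ∀ i, 1 ≤ i → i ≤ n → phi F i x ω ∈ interior Q

/-- `Q` is strongly invariant: every point of `Q` can be steered into the interior of `Q`. -/
def StronglyInvariant {X U : Type*} [TopologicalSpace X] (F : X → U → X) (Q : Set X) : Prop :=
  ∀ x ∈ Q, ∃ u, F x u ∈ interior Q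

/-- `a_n(f,Q)`: infimum over strongly `(n,Q)`-spanning (finite) sets `S` of
`∑_{ω ∈ S} exp ((S_n f)(ω))`. -/
def aInv {X U : Type*} [TopologicalSpace X] (F : X → U → X) (f : U → ℝ) (Q : Set X) (n : ℕ) :
    ℝ≥0∞ :=
  ⨅ (S : Finset (ℕ → U)) (_ : IsSpanningSet F Q n ↑S),
    ∑ ω ∈ S, ENNReal.ofReal (Real.exp (Snf f n ω))

/-- The inner invariance pressure `P_int(f,Q) = lim (1/n) log a_n(f,Q)` (as a limsup, with
values in the extended reals). -/
def Pinv {X U : Type*} [TopologicalSpace X] (F : X → U → X) (f : U → ℝ) (Q : Set X) : EReal :=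
  Filter.atTop.limsup fun n : ℕ => (((n : ℝ)⁻¹ : ℝ) : EReal) * ENNReal.log (aInv F f Q n)

/-- If `f` is bounded below and `F(Q,U) ⊆ int Q`, then `P_int(f,Q) = inf_{u ∈ U} f(u)`. -/
theorem pressure_eq_inf_of_maps_into_interior {X U : Type*} [MetricSpace X] [Nonempty U]
    (F : X → U → X) (hF : ∀ u, Continuous fun x => F x u)
    (Q : Set X) (hQ : IsCompact Q) (hQne : Q.Nonempty)
    (f : U → ℝ) (hf : BddBelow (Set.range f))
    (hFQ : ∀ x ∈ Q, ∀ u : U, F x u ∈ interior Q) :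
    Pinv F f Q = ⨅ u : U, ((f u : ℝ) : EReal) := by
  set m : ℝ := ⨅ u : U, f u with hm
  have hmle : ∀ u : U, m ≤ f u := fun u => ciInf_le hf u
  -- the constant sequence spans
  have hspan : ∀ (u : U) (n : ℕ),
      IsSpanningSet F Q n (↑({fun _ => u} : Finset (ℕ → U))) := by
    intro u n x hx
    refine ⟨fun _ => u, by simp, ?_⟩
    have haux : ∀ j : ℕ, phi F (j + 1) x (fun _ => u) ∈ interior Q := by
      intro j
      induction j with
      | zero => exact hFQ x hx u
      | succ k ih => exact hFQ _ (interior_subset ih) u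
    intro i hi _
    obtain ⟨j, rfl⟩ := Nat.exists_eq_add_of_le hi
    rw [add_comm]
    exact haux j
  -- bounds on aInv for n ≥ 1
  have key : ∀ n : ℕ, 1 ≤ n → ∀ u : U,
      ENNReal.ofReal (Real.exp (n * m)) ≤ aInv F f Q n ∧
        aInv F f Q n ≤ ENNReal.ofReal (Real.exp (n * f u)) := by
    intro n hn u
    constructor
    · refine le_iInf₂ fun S hS => ?_
      obtain ⟨x, hx⟩ := hQne
      obtain ⟨ω, hωS, -⟩ := hS x hx
      have hωS' : ω ∈ S := by exact_mod_cast hωS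
      calc ENNReal.ofReal (Real.exp (n * m))
          ≤ ENNReal.ofReal (Real.exp (Snf f n ω)) := by
            apply ENNReal.ofReal_le_ofReal
            apply Real.exp_le_exp.2
            have : (n : ℝ) * m = ∑ _i ∈ Finset.range n, m := by
              simp [mul_comm]
            rw [this]
            exact Finset.sum_le_sum fun i _ => hmle (ω i)
        _ ≤ ∑ ω ∈ S, ENNReal.ofReal (Real.exp (Snf f n ω)) :=
            Finset.single_le_sum (f := fun ω => ENNReal.ofReal (Real.exp (Snf f n ω)))
              (fun _ _ => zero_le) hωS'
    · have h0 : aInv F f Q n ≤ ∑ ω ∈ ({fun _ => u} : Finset (ℕ → U)),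
          ENNReal.ofReal (Real.exp (Snf f n ω)) := by
        unfold aInv
        exact iInf₂_le ({fun _ => u} : Finset (ℕ → U)) (hspan u n)
      calc aInv F f Q n
          ≤ ∑ ω ∈ ({fun _ => u} : Finset (ℕ → U)),
              ENNReal.ofReal (Real.exp (Snf f n ω)) := h0
        _ = ENNReal.ofReal (Real.exp (n * f u)) := by
            simp [Snf, mul_comm]
  -- pointwise bounds on the sequence for n ≥ 1
  have seq_bound : ∀ n : ℕ, 1 ≤ n → ∀ u : U,
      (m : EReal) ≤ (((n : ℝ)⁻¹ : ℝ) : EReal) * ENNReal.log (aInv F f Q n) ∧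
        (((n : ℝ)⁻¹ : ℝ) : EReal) * ENNReal.log (aInv F f Q n) ≤ (f u : EReal) := by
    intro n hn u
    obtain ⟨h1, h2⟩ := key n hn u
    have hnpos : (0 : ℝ) < n := by exact_mod_cast hn
    set L : EReal := ENNReal.log (aInv F f Q n) with hL
    have hlb : ((n * m : ℝ) : EReal) ≤ L := by
      have := ENNReal.log_monotone h1
      rwa [ENNReal.log_ofReal_of_pos (Real.exp_pos _), Real.log_exp] at this
    have hub : L ≤ ((n * f u : ℝ) : EReal) := by
      have := ENNReal.log_monotone h2
      rwa [ENNReal.log_ofReal_of_pos (Real.exp_pos _), Real.log_exp] at this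
    have hLbot : L ≠ ⊥ := fun h => by
      rw [h] at hlb; exact (EReal.bot_lt_coe _).not_ge hlb
    have hLtop : L ≠ ⊤ := fun h => by
      rw [h] at hub; exact (EReal.coe_lt_top _).not_ge hub
    have hLcoe : L = ((L.toReal : ℝ) : EReal) := (EReal.coe_toReal hLtop hLbot).symm
    have hlb' : (n : ℝ) * m ≤ L.toReal := by
      rw [hLcoe] at hlb; exact_mod_cast hlb
    have hub' : L.toReal ≤ (n : ℝ) * f u := by
      rw [hLcoe] at hub; exact_mod_cast hub
    rw [hLcoe, ← EReal.coe_mul]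
    constructor
    · exact_mod_cast (le_inv_mul_iff₀ hnpos).2 (by linarith [hlb'])
    · exact_mod_cast (inv_mul_le_iff₀ hnpos).2 (by linarith [hub'])
  have hupper : Pinv F f Q ≤ ⨅ u : U, ((f u : ℝ) : EReal) := by
    refine le_iInf fun u => ?_
    apply Filter.limsup_le_of_le (by isBoundedDefault)
    filter_upwards [Filter.eventually_ge_atTop 1] with n hn
    exact (seq_bound n hn u).2
  have hlower : ((m : ℝ) : EReal) ≤ Pinv F f Q := by
    apply Filter.le_limsup_of_frequently_le'
    apply Filter.Eventually.frequently
    filter_upwards [Filter.eventually_ge_atTop 1] with n hn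
    exact (seq_bound n hn (Classical.arbitrary U)).1
  have hcoe : ((m : ℝ) : EReal) = ⨅ u : U, ((f u : ℝ) : EReal) := by
    rw [hm]
    exact Monotone.map_ciInf_of_continuousAt
      (continuous_coe_real_ereal.continuousAt) (fun _ _ h => EReal.coe_le_coe_iff.2 h) hf
  exact le_antisymm hupper (hcoe ▸ hlower)
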